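/- Let A be a unital C*-algebra and α an automorphism of A. Suppose there exist x ∈ A and K ≥ 1 such that for each n ∈ ℕ the linear map Γ_n : ℓ^n_1 → span{x, α(x), …, α^{n−1}(x)} sending the i-th standard basis vector to α^{i−1}(x) is an isomorphism whose inverse has norm at most K. Then the induced homeomorphism S_α of the closed unit ball B_1(A*) (with the weak* topology) has topological entropy at least log 2. -/

import Mathlib

/-- Minimal number of "itinerary sets" `⋂_{k<n} T^{-k} U_k`, with each `U_k ∈ 𝒰`,
needed to cover `S`; i.e. `N(𝒰 ∨ T⁻¹𝒰 ∨ ⋯ ∨ T^{-(n-1)}𝒰)` relative to `S`. -/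
noncomputable def coverN {X : Type*} (S : Set X) (T : X → X) (𝒰 : Set (Set X)) (n : ℕ) : ℕ :=
  sInf {m : ℕ | ∃ c : Fin m → Fin n → Set X,
    (∀ j k, c j k ∈ 𝒰) ∧ S ⊆ ⋃ j, ⋂ k : Fin n, T^[(k : ℕ)] ⁻¹' c j k}


/-- Topological entropy of `T` on `S` via finite open covers, with values in `EReal`. -/
noncomputable def coverEntropyOpen {X : Type*} [TopologicalSpace X]
    (S : Set X) (T : X → X) : EReal :=
  ⨆ 𝒰 : {U : Set (Set X) // U.Finite ∧ (∀ V ∈ U, IsOpen V) ∧ S ⊆ ⋃₀ U},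
    Filter.limsup (fun n : ℕ => ((Real.log (coverN S T 𝒰 n) / n : ℝ) : EReal)) Filter.atTop

open Filter

lemma exists_sign_functional {A : Type*} [CStarAlgebra A]
    (α : A ≃⋆ₐ[ℂ] A) (x : A) (K : ℝ) (hK : 1 ≤ K)
    (hℓ1 : ∀ (n : ℕ) (c : Fin n → ℂ),
      ∑ i : Fin n, ‖c i‖ ≤ K * ‖∑ i : Fin n, c i • (⇑α)^[(i : ℕ)] x‖)
    (n : ℕ) (ε : Fin n → Bool) :
    ∃ σ : WeakDual ℂ A, (∀ a : A, ‖σ a‖ ≤ ‖a‖) ∧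
      ∀ k : Fin n, σ ((⇑α)^[(k : ℕ)] x) = (((if ε k then 1 else -1) / K : ℝ) : ℂ) := by
  have hK0 : (0:ℝ) < K := lt_of_lt_of_le one_pos hK
  set v : Fin n → A := fun i => (⇑α)^[(i : ℕ)] x with hv
  have hli : LinearIndependent ℂ v := by
    rw [Fintype.linearIndependent_iff]
    intro c hc i
    have h := hℓ1 n c
    rw [show ∑ i : Fin n, c i • (⇑α)^[(i : ℕ)] x = 0 from hc] at h
    simp only [norm_zero, mul_zero] at h
    have hsum : ∑ i : Fin n, ‖c i‖ = 0 :=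
      le_antisymm h (Finset.sum_nonneg fun j _ => norm_nonneg _)
    have := (Finset.sum_eq_zero_iff_of_nonneg
      (fun j _ => norm_nonneg (c j))).mp hsum i (Finset.mem_univ i)
    exact norm_eq_zero.mp this
  set p : Submodule ℂ A := Submodule.span ℂ (Set.range v) with hp
  set b : Module.Basis (Fin n) ℂ p := Module.Basis.span hli with hb
  set t : Fin n → ℂ := fun k => (((if ε k then 1 else -1) / K : ℝ) : ℂ) with ht
  have htabs : ∀ k, ‖t k‖ = 1 / K := by
    intro k
    simp only [ht, Complex.norm_real, Real.norm_eq_abs, abs_div, abs_of_pos hK0]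
    cases ε k <;> norm_num
  set f₀ : p →ₗ[ℂ] ℂ := Module.Basis.constr b ℂ t with hf₀
  have hbound : ∀ y : p, ‖f₀ y‖ ≤ 1 * ‖y‖ := by
    intro y
    rw [one_mul]
    have hy : f₀ y = ∑ i, b.equivFun y i • t i := b.constr_apply_fintype ℂ t y
    have hyrep : (y : A) = ∑ i, b.equivFun y i • v i := by
      have h1 : (y : p) = ∑ i, b.equivFun y i • b i := (b.sum_equivFun y).symm
      calc (y : A) = ((∑ i, b.equivFun y i • b i : p) : A) := by rw [← h1]
        _ = ∑ i, b.equivFun y i • ((b i : p) : A) := by push_cast; rfl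
        _ = ∑ i, b.equivFun y i • v i := by
            exact Finset.sum_congr rfl fun i _ => by rw [hb, Module.Basis.span_apply hli i]
    calc ‖f₀ y‖ = ‖∑ i, b.equivFun y i • t i‖ := by rw [hy]
      _ ≤ ∑ i, ‖b.equivFun y i • t i‖ := by
          exact norm_sum_le _ _
      _ = ∑ i, ‖b.equivFun y i‖ * (1 / K) := by
          simp only [smul_eq_mul, norm_mul]
          exact Finset.sum_congr rfl fun i _ => by rw [htabs]
      _ = (∑ i, ‖b.equivFun y i‖) * (1 / K) := by rw [Finset.sum_mul]
      _ ≤ (K * ‖∑ i, b.equivFun y i • v i‖) * (1 / K) := by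
          apply mul_le_mul_of_nonneg_right (hℓ1 n _) (by positivity)
      _ = ‖∑ i, b.equivFun y i • v i‖ := by field_simp
      _ = ‖(y : A)‖ := by rw [hyrep]
      _ = ‖y‖ := rfl
  set f : p →L[ℂ] ℂ := LinearMap.mkContinuous f₀ 1 hbound with hf
  obtain ⟨g, hg, hgnorm⟩ := exists_extension_norm_eq p f
  have hgle : ‖g‖ ≤ 1 := by
    rw [hgnorm]
    exact LinearMap.mkContinuous_norm_le f₀ zero_le_one hbound
  refine ⟨g, ?_, ?_⟩
  · intro a
    calc ‖g a‖ = ‖g a‖ := rfl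
      _ ≤ ‖g‖ * ‖a‖ := g.le_opNorm a
      _ ≤ 1 * ‖a‖ := mul_le_mul_of_nonneg_right hgle (norm_nonneg a)
      _ = ‖a‖ := one_mul _
  · intro k
    have hmem : v k ∈ p := Submodule.subset_span (Set.mem_range_self k)
    have hbk : (⟨v k, hmem⟩ : p) = b k := by
      apply Subtype.ext
      rw [hb, Module.Basis.span_apply hli k]
    have := hg ⟨v k, hmem⟩
    rw [hbk] at this
    show g (v k) = t k
    rw [show g (v k) = g ((b k : p) : A) by rw [← hbk]]
    rw [hg (b k)]
    show f₀ (b k) = t k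
    rw [hf₀, Module.Basis.constr_basis]

/-- if some `x ∈ A` has orbit `x, α(x), α²(x), …` spanning copies of `ℓ¹ₙ`
with inverse-norm bound `K`, then the induced homeomorphism of the closed unit ball of
the dual with the weak* topology has topological entropy at least `log 2`. -/
theorem log_two_le_coverEntropyOpen_dualBall
    (A : Type*) [CStarAlgebra A]
    (α : A ≃⋆ₐ[ℂ] A) (x : A) (K : ℝ) (hK : 1 ≤ K)
    (hℓ1 : ∀ (n : ℕ) (c : Fin n → ℂ),
      ∑ i : Fin n, ‖c i‖ ≤ K * ‖∑ i : Fin n, c i • (⇑α)^[(i : ℕ)] x‖)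
    (T : WeakDual ℂ A → WeakDual ℂ A)
    (hT : ∀ (σ : WeakDual ℂ A) (a : A), T σ a = σ (α a)) :
    (Real.log 2 : EReal) ≤
      coverEntropyOpen {σ : WeakDual ℂ A | ∀ a : A, ‖σ a‖ ≤ ‖a‖} T := by
  classical
  have hK0 : (0:ℝ) < K := lt_of_lt_of_le one_pos hK
  set S : Set (WeakDual ℂ A) := {σ | ∀ a : A, ‖σ a‖ ≤ ‖a‖} with hS
  have hTiter : ∀ (k : ℕ) (σ : WeakDual ℂ A) (a : A), T^[k] σ a = σ ((⇑α)^[k] a) := by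
    intro k
    induction k with
    | zero => intro σ a; simp
    | succ k ih =>
      intro σ a
      rw [Function.iterate_succ_apply, ih, hT]
      exact congrArg σ (Function.iterate_succ_apply' (⇑α) k a).symm
  set r : ℝ := 1 / (2 * K) with hr
  have hr0 : (0:ℝ) < r := by positivity
  have hrK : r < 1 / K := by
    rw [hr, div_lt_div_iff₀ (by positivity) hK0]
    nlinarith
  set Up : Set (WeakDual ℂ A) := {σ | -r < (σ x).re} with hUp
  set Um : Set (WeakDual ℂ A) := {σ | (σ x).re < r} with hUm
  have hφ : Continuous fun σ : WeakDual ℂ A => (σ x).re :=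
    Complex.continuous_re.comp (WeakDual.eval_continuous x)
  have hopenp : IsOpen Up := isOpen_lt continuous_const hφ
  have hopenm : IsOpen Um := isOpen_lt hφ continuous_const
  set 𝒰 : Set (Set (WeakDual ℂ A)) := {Up, Um} with h𝒰
  have h𝒰prop : 𝒰.Finite ∧ (∀ V ∈ 𝒰, IsOpen V) ∧ S ⊆ ⋃₀ 𝒰 := by
    refine ⟨(Set.finite_singleton Um).insert Up, ?_, ?_⟩
    · rintro V (rfl | rfl)
      · exact hopenp
      · exact hopenm
    · intro σ _
      by_cases h : -r < (σ x).re
      · exact ⟨Up, Or.inl rfl, h⟩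
      · exact ⟨Um, Or.inr rfl, lt_of_le_of_lt (not_lt.mp h) (by linarith)⟩
  -- force signs
  have key : ∀ n : ℕ, 2 ^ n ≤ coverN S T 𝒰 n := by
    intro n
    choose σf hσS hσval using fun ε : Fin n → Bool =>
      exists_sign_functional α x K hK hℓ1 n ε
    have hre : ∀ (ε : Fin n → Bool) (k : Fin n),
        ((T^[(k : ℕ)] (σf ε)) x).re = (if ε k then 1 else -1) / K := by
      intro ε k
      rw [hTiter, hσval ε k, Complex.ofReal_re]
    have hforcep : ∀ (ε : Fin n → Bool) (k : Fin n),
        T^[(k : ℕ)] (σf ε) ∈ Up → ε k = true := by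
      intro ε k hmem
      by_contra hb
      have hεk : ε k = false := by simpa using hb
      have h1 : -r < ((T^[(k : ℕ)] (σf ε)) x).re := hmem
      rw [hre ε k, hεk] at h1
      have heq : ((if false = true then 1 else -1) / K : ℝ) = -(1 / K) := by norm_num [neg_div, one_div]
      rw [heq] at h1
      linarith
    have hforcem : ∀ (ε : Fin n → Bool) (k : Fin n),
        T^[(k : ℕ)] (σf ε) ∈ Um → ε k = false := by
      intro ε k hmem
      by_contra hb
      have hεk : ε k = true := by simpa using hb
      have h1 : ((T^[(k : ℕ)] (σf ε)) x).re < r := hmem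
      rw [hre ε k, hεk, if_pos rfl] at h1
      linarith
    have hlb : ∀ m ∈ {m : ℕ | ∃ c : Fin m → Fin n → Set (WeakDual ℂ A),
        (∀ j k, c j k ∈ 𝒰) ∧ S ⊆ ⋃ j, ⋂ k : Fin n, T^[(k : ℕ)] ⁻¹' c j k},
        2 ^ n ≤ m := by
      rintro m ⟨c, hc𝒰, hccov⟩
      choose J hJ using fun ε : Fin n → Bool => Set.mem_iUnion.mp (hccov (hσS ε))
      have hJk : ∀ (ε : Fin n → Bool) (k : Fin n), T^[(k : ℕ)] (σf ε) ∈ c (J ε) k :=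
        fun ε k => Set.mem_iInter.mp (hJ ε) k
      have hinj : Function.Injective J := by
        intro ε ε' hεε'
        funext k
        have h1 := hJk ε k
        have h2 := hJk ε' k
        rw [hεε'] at h1
        have hmem𝒰 := hc𝒰 (J ε') k
        rw [h𝒰] at hmem𝒰
        rcases hmem𝒰 with h | h
        · rw [h] at h1 h2
          rw [hforcep ε k h1, hforcep ε' k h2]
        · rw [Set.mem_singleton_iff.mp h] at h1 h2
          rw [hforcem ε k h1, hforcem ε' k h2]
      calc 2 ^ n = Fintype.card (Fin n → Bool) := by simp
        _ ≤ Fintype.card (Fin m) := Fintype.card_le_of_injective J hinj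
        _ = m := Fintype.card_fin m
    have hne : ({m : ℕ | ∃ c : Fin m → Fin n → Set (WeakDual ℂ A),
        (∀ j k, c j k ∈ 𝒰) ∧ S ⊆ ⋃ j, ⋂ k : Fin n, T^[(k : ℕ)] ⁻¹' c j k}).Nonempty := by
      refine ⟨2 ^ n, fun j k =>
        if ((finFunctionFinEquiv.symm j) k : Fin 2) = 0 then Up else Um, ?_, ?_⟩
      · intro j k
        dsimp only
        split
        · exact Or.inl rfl
        · exact Or.inr rfl
      · intro σ _
        set pfun : Fin n → Fin 2 := fun k => if T^[(k : ℕ)] σ ∈ Up then 0 else 1 with hpfun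
        refine Set.mem_iUnion.mpr ⟨finFunctionFinEquiv pfun, Set.mem_iInter.mpr fun k => ?_⟩
        show T^[(k : ℕ)] σ ∈ (if ((finFunctionFinEquiv.symm (finFunctionFinEquiv pfun)) k : Fin 2) = 0 then Up else Um)
        rw [Equiv.symm_apply_apply]
        by_cases h : T^[(k : ℕ)] σ ∈ Up
        · have : pfun k = 0 := by simp [hpfun, h]
          rw [this, if_pos rfl]
          exact h
        · have hp1 : pfun k = 1 := by simp [hpfun, h]
          rw [hp1, if_neg (by decide)]
          show (T^[(k : ℕ)] σ x).re < r
          have hle : (T^[(k : ℕ)] σ x).re ≤ -r := not_lt.mp h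
          linarith
    exact hlb _ (Nat.sInf_mem hne)
  have hlim : (Real.log 2 : EReal) ≤
      limsup (fun n : ℕ => ((Real.log (coverN S T 𝒰 n) / n : ℝ) : EReal)) atTop := by
    have hev : (fun _ : ℕ => (Real.log 2 : EReal)) ≤ᶠ[atTop]
        fun n : ℕ => ((Real.log (coverN S T 𝒰 n) / n : ℝ) : EReal) := by
      filter_upwards [eventually_ge_atTop 1] with n hn
      have hn0 : (0:ℝ) < n := by exact_mod_cast hn
      have h1 : (2:ℝ) ^ n ≤ (coverN S T 𝒰 n : ℝ) := by exact_mod_cast key n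
      have hlog : (n : ℝ) * Real.log 2 ≤ Real.log (coverN S T 𝒰 n) := by
        calc (n : ℝ) * Real.log 2 = Real.log ((2:ℝ) ^ n) := (Real.log_pow 2 n).symm
          _ ≤ _ := Real.log_le_log (by positivity) h1
      have hfin : Real.log 2 ≤ Real.log (coverN S T 𝒰 n) / n :=
        (le_div_iff₀ hn0).mpr (by linarith)
      exact_mod_cast hfin
    calc (Real.log 2 : EReal)
        = limsup (fun _ : ℕ => (Real.log 2 : EReal)) atTop := (limsup_const _).symm
      _ ≤ _ := limsup_le_limsup hev
  exact hlim.trans (le_iSup_of_le ⟨𝒰, h𝒰prop⟩ le_rfl)
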